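/- For all real λ > 0, β > 0, t ≥ 0: ∫₀^∞ u · λ e^{-λ u - β t} I₀(2√(λ β u t)) du = (β t + 1)/λ, and ∫₀^∞ u² · λ e^{-λ u - β t} I₀(2√(λ β u t)) du = (β² t² + 4 β t + 2)/λ². -/

import Mathlib

open Real MeasureTheory Filter Finset
open scoped Nat

/-- Wright function `Φ(ρ, δ, z) = Σ_{j≥0} z^j / (j! Γ(ρ j + δ))`. -/
noncomputable def wright (ρ δ z : ℝ) : ℝ :=
  ∑' j : ℕ, z ^ j / ((Nat.factorial j : ℝ) * Real.Gamma (ρ * (j : ℝ) + δ))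

/-- Wright function with second parameter 0:
`Φ(ρ, 0, z) = Σ_{j≥1} z^j / (j! Γ(ρ j))`. -/
noncomputable def wright0 (ρ z : ℝ) : ℝ :=
  ∑' j : ℕ, z ^ (j + 1) /
    ((Nat.factorial (j + 1) : ℝ) * Real.Gamma (ρ * ((j : ℝ) + 1)))

/-- Two-parameter Mittag-Leffler function `E_{ρ,δ}(z) = Σ_{j≥0} z^j / Γ(ρ j + δ)`. -/
noncomputable def ml2 (ρ δ z : ℝ) : ℝ :=
  ∑' j : ℕ, z ^ j / Real.Gamma (ρ * (j : ℝ) + δ)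

/-- Three-parameter generalized Mittag-Leffler function
`E^γ_{ρ,δ}(z) = Σ_{j≥0} (Γ(γ+j)/Γ(γ)) z^j / (j! Γ(ρ j + δ))`. -/
noncomputable def ml3 (γ ρ δ z : ℝ) : ℝ :=
  ∑' j : ℕ, (Real.Gamma (γ + (j : ℝ)) / Real.Gamma γ) * z ^ j /
    ((Nat.factorial j : ℝ) * Real.Gamma (ρ * (j : ℝ) + δ))

/-- Modified Bessel function of the first kind of order 0:
`I₀(z) = Σ_{j≥0} (z/2)^{2j} / (j!)²`. -/
noncomputable def besselI0 (z : ℝ) : ℝ :=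
  ∑' j : ℕ, (z / 2) ^ (2 * j) / ((Nat.factorial j : ℝ) * (Nat.factorial j : ℝ))


lemma exp_tsum (x : ℝ) : ∑' j : ℕ, x ^ j / (j ! : ℝ) = Real.exp x := by
  rw [Real.exp_eq_exp_ℝ, NormedSpace.exp_eq_tsum_div]

lemma integral_pow_exp (n : ℕ) {c : ℝ} (hc : 0 < c) :
    ∫ u in Set.Ioi (0:ℝ), u ^ n * Real.exp (-(c * u)) = (n ! : ℝ) / c ^ (n + 1) := by
  have h := integral_rpow_mul_exp_neg_mul_Ioi (a := (n:ℝ)+1) (r := c) (by positivity) hc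
  rw [show ((n:ℝ)+1-1) = ((n:ℕ):ℝ) by ring] at h
  simp_rw [Real.rpow_natCast] at h
  rw [h, Real.Gamma_nat_eq_factorial,
    show ((n:ℝ)+1) = (((n+1:ℕ)):ℝ) by push_cast; ring, Real.rpow_natCast]
  field_simp
  rw [← mul_pow, one_div_mul_cancel hc.ne', one_pow]

lemma integrable_pow_exp (n : ℕ) {c : ℝ} (hc : 0 < c) :
    IntegrableOn (fun u : ℝ => u ^ n * Real.exp (-(c * u))) (Set.Ioi 0) := by
  have h := integrableOn_rpow_mul_exp_neg_mul_rpow (s := (n:ℝ)) (p := 1)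
    (by exact_mod_cast neg_one_lt_zero.trans_le (Nat.cast_nonneg n)) one_pos hc
  simpa [Real.rpow_natCast, neg_mul] using h

lemma cast_le_two_pow (j : ℕ) : ((j:ℝ)+1) ≤ 2 ^ j := by
  have h : j + 1 ≤ 2 ^ j := (Nat.lt_two_pow_self (n := j))
  exact_mod_cast Nat.cast_le.mpr h

lemma summable1 {x : ℝ} (hx : 0 ≤ x) :
    Summable (fun j : ℕ => ((j:ℝ)+1) * x ^ j / j !) := by
  refine Summable.of_nonneg_of_le (fun j => by positivity)
    (fun j => ?_) (Real.summable_pow_div_factorial (2*x))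
  rw [mul_pow, div_le_div_iff_of_pos_right (by positivity)]
  exact mul_le_mul_of_nonneg_right (cast_le_two_pow j) (by positivity)

lemma summable0 {x : ℝ} (hx : 0 ≤ x) :
    Summable (fun j : ℕ => (j:ℝ) * x ^ j / j !) := by
  refine Summable.of_nonneg_of_le (fun j => by positivity)
    (fun j => ?_) (summable1 hx)
  have : (j:ℝ) ≤ (j:ℝ)+1 := by linarith
  gcongr

lemma summable2 {x : ℝ} (hx : 0 ≤ x) :
    Summable (fun j : ℕ => ((j:ℝ)+1) * ((j:ℝ)+2) * x ^ j / j !) := by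
  refine Summable.of_nonneg_of_le (fun j => by positivity)
    (fun j => ?_) ((Real.summable_pow_div_factorial (4*x)).mul_left 2)
  have h1 : ((j:ℝ)+1) ≤ 2 ^ j := cast_le_two_pow j
  have h2 : ((j:ℝ)+2) ≤ 2 * 2 ^ j := by nlinarith [cast_le_two_pow j]
  have : ((j:ℝ)+1) * ((j:ℝ)+2) ≤ 2 * 4 ^ j := by
    calc ((j:ℝ)+1) * ((j:ℝ)+2) ≤ 2 ^ j * (2 * 2 ^ j) := by
          apply mul_le_mul h1 h2 (by positivity) (by positivity)
      _ = 2 * 4 ^ j := by rw [show (4:ℝ) = 2*2 by norm_num, mul_pow]; ring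
  calc ((j:ℝ)+1) * ((j:ℝ)+2) * x ^ j / j ! ≤ (2 * 4 ^ j) * x ^ j / j ! := by gcongr
    _ = 2 * ((4*x) ^ j / j !) := by rw [mul_pow]; ring

lemma summable01 {x : ℝ} (hx : 0 ≤ x) :
    Summable (fun j : ℕ => (j:ℝ) * ((j:ℝ)+1) * x ^ j / j !) := by
  refine Summable.of_nonneg_of_le (fun j => by positivity) (fun j => ?_) (summable2 hx)
  have : (j:ℝ) * ((j:ℝ)+1) ≤ ((j:ℝ)+1) * ((j:ℝ)+2) := by nlinarith [Nat.cast_nonneg (α := ℝ) j]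
  gcongr

lemma tsum_j {x : ℝ} (hx : 0 ≤ x) :
    ∑' j : ℕ, (j:ℝ) * x ^ j / j ! = x * Real.exp x := by
  rw [Summable.tsum_eq_zero_add (summable0 hx)]
  simp only [Nat.cast_zero, zero_mul, zero_div, zero_add]
  have h : ∀ j : ℕ, ((j+1 : ℕ):ℝ) * x ^ (j+1) / (j+1)! = x * (x ^ j / j !) := by
    intro j
    rw [Nat.factorial_succ]
    push_cast
    have hj : ((j:ℝ)+1) ≠ 0 := by positivity
    field_simp
    ring
  rw [tsum_congr h, tsum_mul_left, exp_tsum]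

lemma S1 {x : ℝ} (hx : 0 ≤ x) :
    ∑' j : ℕ, ((j:ℝ)+1) * x ^ j / j ! = Real.exp x * (x + 1) := by
  have h : ∀ j : ℕ, ((j:ℝ)+1) * x ^ j / j ! = (j:ℝ) * x ^ j / j ! + x ^ j / j ! := by
    intro j; ring
  rw [tsum_congr h, Summable.tsum_add (summable0 hx) (Real.summable_pow_div_factorial x),
    tsum_j hx, exp_tsum]
  ring

lemma S2 {x : ℝ} (hx : 0 ≤ x) :
    ∑' j : ℕ, ((j:ℝ)+1) * ((j:ℝ)+2) * x ^ j / j ! = Real.exp x * (x^2 + 4*x + 2) := by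
  have hT : ∑' j : ℕ, (j:ℝ) * ((j:ℝ)+1) * x ^ j / j ! = x * (x+2) * Real.exp x := by
    rw [Summable.tsum_eq_zero_add (summable01 hx)]
    simp only [Nat.cast_zero, zero_mul, zero_div, zero_add]
    have h : ∀ j : ℕ, ((j+1 : ℕ):ℝ) * (((j+1 : ℕ):ℝ)+1) * x ^ (j+1) / (j+1)!
        = x * (((j:ℝ)+1) * x ^ j / j ! + x ^ j / j !) := by
      intro j
      rw [Nat.factorial_succ]
      push_cast
      have hj : ((j:ℝ)+1) ≠ 0 := by positivity
      field_simp
      ring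
    rw [tsum_congr h, tsum_mul_left,
      Summable.tsum_add (summable1 hx) (Real.summable_pow_div_factorial x), S1 hx, exp_tsum]
    ring
  have h : ∀ j : ℕ, ((j:ℝ)+1) * ((j:ℝ)+2) * x ^ j / j !
      = (j:ℝ) * ((j:ℝ)+1) * x ^ j / j ! + 2 * (((j:ℝ)+1) * x ^ j / j !) := by
    intro j; ring
  rw [tsum_congr h, Summable.tsum_add (summable01 hx) ((summable1 hx).mul_left 2),
    hT, tsum_mul_left, S1 hx]
  ring

lemma besselI0_tsum {x : ℝ} (hx : 0 ≤ x) :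
    besselI0 (2 * Real.sqrt x) = ∑' j : ℕ, x ^ j / ((j ! : ℝ) * j !) := by
  unfold besselI0
  refine tsum_congr fun j => ?_
  rw [mul_div_cancel_left₀ _ (two_ne_zero), pow_mul, Real.sq_sqrt hx]


lemma moment (lam β t : ℝ) (hlam : 0 < lam) (hβ : 0 < β) (ht : 0 ≤ t) (k : ℕ)
    (hs : Summable fun j : ℕ => (((j+k)! : ℝ) / ((j ! : ℝ) * j !)) * (β*t) ^ j) :
    (∫ u in Set.Ioi (0:ℝ), u ^ k * (lam * Real.exp (-(lam * u) - β * t) *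
        besselI0 (2 * Real.sqrt (lam * β * u * t))))
    = Real.exp (-(β*t)) / lam ^ k *
        ∑' j : ℕ, (((j+k)! : ℝ) / ((j ! : ℝ) * j !)) * (β*t) ^ j := by
  set c : ℕ → ℝ := fun j => lam * Real.exp (-(β*t)) * ((lam*β*t)^j / ((j ! : ℝ) * j !)) with hc
  set F : ℕ → ℝ → ℝ := fun j u => c j * (u ^ (j+k) * Real.exp (-(lam * u))) with hF
  have hcnn : ∀ j, 0 ≤ c j := fun j => by
    have : (0:ℝ) ≤ (lam*β*t)^j := by positivity
    rw [hc]; positivity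
  have hint : ∀ j, IntegrableOn (F j) (Set.Ioi 0) := fun j =>
    ((integrable_pow_exp (j+k) hlam).const_mul _)
  have hval : ∀ j, ∫ u in Set.Ioi (0:ℝ), F j u = c j * (((j+k)! : ℝ) / lam ^ (j+k+1)) := by
    intro j
    rw [hF]
    simp only
    rw [integral_const_mul, integral_pow_exp (j+k) hlam]
  have key : ∀ j, c j * (((j+k)! : ℝ) / lam ^ (j+k+1))
      = (Real.exp (-(β*t)) / lam ^ k) * ((((j+k)! : ℝ) / ((j ! : ℝ) * j !)) * (β*t) ^ j) := by
    intro j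
    have hl : lam ≠ 0 := hlam.ne'
    have hf : ((j ! : ℝ)) ≠ 0 := by positivity
    rw [hc]
    simp only
    rw [show (lam*β*t)^j = lam^j * (β*t)^j by rw [← mul_pow]; ring_nf]
    rw [pow_add, pow_add]
    field_simp
  have heq : ∀ u ∈ Set.Ioi (0:ℝ),
      u ^ k * (lam * Real.exp (-(lam * u) - β * t) *
        besselI0 (2 * Real.sqrt (lam * β * u * t))) = ∑' j, F j u := by
    intro u hu
    have hu0 : (0:ℝ) < u := hu
    rw [besselI0_tsum (by positivity)]
    have hpt : ∀ j : ℕ, F j u =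
        (u ^ k * (lam * Real.exp (-(lam*u) - β*t))) * ((lam*β*u*t)^j / ((j ! : ℝ) * j !)) := by
      intro j
      rw [hF, hc]
      simp only
      rw [sub_eq_add_neg, Real.exp_add, show lam*β*u*t = (lam*β*t)*u by ring, mul_pow, pow_add]
      ring
    rw [tsum_congr hpt, tsum_mul_left]; ring
  rw [setIntegral_congr_fun measurableSet_Ioi heq,
    ← MeasureTheory.integral_tsum_of_summable_integral_norm hint ?_]
  · rw [tsum_congr fun j => (hval j).trans (key j), tsum_mul_left]
  · have hnorm : ∀ j, (∫ u in Set.Ioi (0:ℝ), ‖F j u‖)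
        = (Real.exp (-(β*t)) / lam ^ k) * ((((j+k)! : ℝ) / ((j ! : ℝ) * j !)) * (β*t) ^ j) := by
      intro j
      rw [setIntegral_congr_fun measurableSet_Ioi
        (fun u hu => Real.norm_of_nonneg (mul_nonneg (hcnn j)
          (mul_nonneg (pow_nonneg (le_of_lt hu) _) (Real.exp_pos _).le))),
        hval j, key j]
    rw [funext hnorm]
    exact hs.mul_left _

/-- first and second moments of the inverse compound
Poisson-exponential process `Y(t)`. -/
theorem stmt6 (lam β t : ℝ) (hlam : 0 < lam) (hβ : 0 < β) (ht : 0 ≤ t) :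
    (∫ u in Set.Ioi (0 : ℝ),
      u * (lam * Real.exp (-(lam * u) - β * t) *
        besselI0 (2 * Real.sqrt (lam * β * u * t))))
      = (β * t + 1) / lam ∧
    (∫ u in Set.Ioi (0 : ℝ),
      u ^ 2 * (lam * Real.exp (-(lam * u) - β * t) *
        besselI0 (2 * Real.sqrt (lam * β * u * t))))
      = (β ^ 2 * t ^ 2 + 4 * β * t + 2) / lam ^ 2 := by
  have hx : 0 ≤ β * t := by positivity
  have hcast1 : ∀ j : ℕ, (((j+1)! : ℝ) / ((j ! : ℝ) * j !)) * (β*t) ^ j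
      = ((j:ℝ)+1) * (β*t) ^ j / j ! := by
    intro j
    have hf : ((j ! : ℝ)) ≠ 0 := by positivity
    rw [Nat.factorial_succ]
    push_cast
    field_simp
  have hcast2 : ∀ j : ℕ, (((j+2)! : ℝ) / ((j ! : ℝ) * j !)) * (β*t) ^ j
      = ((j:ℝ)+1) * ((j:ℝ)+2) * (β*t) ^ j / j ! := by
    intro j
    have hf : ((j ! : ℝ)) ≠ 0 := by positivity
    rw [show j + 2 = (j+1)+1 from rfl, Nat.factorial_succ, Nat.factorial_succ]
    push_cast
    field_simp
    ring
  have hexp : Real.exp (-(β*t)) * Real.exp (β*t) = 1 := by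
    rw [← Real.exp_add]; simp
  constructor
  · have h := moment lam β t hlam hβ ht 1
      (by rw [funext hcast1]; exact summable1 hx)
    simp only [pow_one] at h
    rw [h, tsum_congr hcast1, S1 hx]
    field_simp
    nlinarith [hexp, Real.exp_pos (β*t)]
  · have h := moment lam β t hlam hβ ht 2
      (by rw [funext hcast2]; exact summable2 hx)
    rw [h, tsum_congr hcast2, S2 hx]
    field_simp
    nlinarith [hexp, Real.exp_pos (β*t)]
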